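/- Let p be a linear predicate and σ : [0,T] → ℝ^V a continuous piecewise-linear signal (interpolation of a timed state sequence). Then there exists a finite time sequence 0 = γ_0 < γ_1 < ... < γ_N = T such that for each i ∈ [1,N]: (1) σ is affine on [γ_{i-1}, γ_i], and (2) if (σ(γ_{i-1}), σ(γ_i)) is a δ-crossing pair with respect to p, then it is stationary. -/

import Mathlib

/-- for a continuous piecewise-linear signal `σ` (affine on the
segments of a timed state sequence) and a linear predicate `p` with δ-tightening
`p^δ`, there exists a refined time sequence `0 = γ_0 < ... < γ_N = T` such that
on each segment `σ` is affine and every δ-crossing endpoint pair is stationary. -/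
theorem stmt6 {V : Type*} [Fintype V] (c : V → ℝ) (b δ T : ℝ) (hδ : 0 < δ) (hT : 0 < T)
    (M : ℕ) (γ' : Fin (M + 1) → ℝ) (hmono : StrictMono γ')
    (h0 : γ' 0 = 0) (hlast : γ' (Fin.last M) = T)
    (σ : ℝ → V → ℝ)
    (haff : ∀ i : Fin M, ∃ u w : V → ℝ,
      ∀ t ∈ Set.Icc (γ' i.castSucc) (γ' i.succ), σ t = u + t • w) :
    ∃ N : ℕ, ∃ γ : Fin (N + 1) → ℝ, StrictMono γ ∧ γ 0 = 0 ∧ γ (Fin.last N) = T ∧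
      ∀ i : Fin N,
        (∃ u w : V → ℝ, ∀ t ∈ Set.Icc (γ i.castSucc) (γ i.succ), σ t = u + t • w) ∧
        (¬ ((δ ≤ ∑ j, c j * σ (γ i.castSucc) j + b) ↔ (δ ≤ ∑ j, c j * σ (γ i.succ) j + b)) →
          0 ≤ ∑ j, c j * σ (γ i.castSucc) j + b ∧ 0 ≤ ∑ j, c j * σ (γ i.succ) j + b) := by
  classical
  have hγ'mem : ∀ j, 0 ≤ γ' j ∧ γ' j ≤ T := fun j =>
    ⟨h0 ▸ hmono.monotone (Fin.zero_le j), hlast ▸ hmono.monotone (Fin.le_last j)⟩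
  -- choose a zero of the affine function in each open segment, if one exists
  have hex : ∀ i : Fin M, ∃ tpi : ℝ, (0 ≤ tpi ∧ tpi ≤ T) ∧
      ((∃ t ∈ Set.Ioo (γ' i.castSucc) (γ' i.succ), ∑ j, c j * σ t j + b = 0) →
        tpi ∈ Set.Ioo (γ' i.castSucc) (γ' i.succ) ∧ ∑ j, c j * σ tpi j + b = 0) := by
    intro i
    by_cases h : ∃ t ∈ Set.Ioo (γ' i.castSucc) (γ' i.succ), ∑ j, c j * σ t j + b = 0
    · obtain ⟨t, ht, hft⟩ := h
      refine ⟨t, ⟨le_trans (hγ'mem i.castSucc).1 ht.1.le,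
        le_trans ht.2.le (hγ'mem i.succ).2⟩, fun _ => ⟨ht, hft⟩⟩
    · exact ⟨0, ⟨le_refl _, hT.le⟩, fun h' => absurd h' h⟩
  choose tp htp using hex
  set F : Finset ℝ := (Finset.univ.image γ') ∪ (Finset.univ.image tp) with hF
  have hγ'F : ∀ j, γ' j ∈ F := fun j =>
    Finset.mem_union_left _ (Finset.mem_image.mpr ⟨j, Finset.mem_univ _, rfl⟩)
  have htpF : ∀ i, tp i ∈ F := fun i =>
    Finset.mem_union_right _ (Finset.mem_image.mpr ⟨i, Finset.mem_univ _, rfl⟩)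
  have h0F : (0 : ℝ) ∈ F := h0 ▸ hγ'F 0
  have hTF : T ∈ F := hlast ▸ hγ'F (Fin.last M)
  have hbound : ∀ x ∈ F, 0 ≤ x ∧ x ≤ T := by
    intro x hx
    rw [hF] at hx
    simp only [Finset.mem_union, Finset.mem_image, Finset.mem_univ, true_and] at hx
    rcases hx with ⟨j, rfl⟩ | ⟨i, rfl⟩
    · exact hγ'mem j
    · exact (htp i).1
  have hne : F.Nonempty := ⟨0, h0F⟩
  obtain ⟨N, hN⟩ : ∃ N, F.card = N + 1 :=
    ⟨F.card - 1, (Nat.succ_pred_eq_of_pos hne.card_pos).symm⟩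
  set e := F.orderIsoOfFin hN with he
  set γ : Fin (N + 1) → ℝ := fun k => (e k : ℝ) with hγ
  have hmonoγ : StrictMono γ := fun k l h => by
    have := e.strictMono h
    exact_mod_cast this
  have hγF : ∀ k, γ k ∈ F := fun k => (e k).2
  have hsurj : ∀ x ∈ F, ∃ k, γ k = x := by
    intro x hx
    refine ⟨e.symm ⟨x, hx⟩, ?_⟩
    simp [hγ]
  have hγ0 : γ 0 = 0 := by
    obtain ⟨k, hk⟩ := hsurj 0 h0F
    have h1 : γ 0 ≤ γ k := hmonoγ.monotone (Fin.zero_le k)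
    rw [hk] at h1
    exact le_antisymm h1 (hbound _ (hγF 0)).1
  have hγT : γ (Fin.last N) = T := by
    obtain ⟨k, hk⟩ := hsurj T hTF
    have h1 : γ k ≤ γ (Fin.last N) := hmonoγ.monotone (Fin.le_last k)
    rw [hk] at h1
    exact le_antisymm (hbound _ (hγF (Fin.last N))).2 h1
  refine ⟨N, γ, hmonoγ, hγ0, hγT, ?_⟩
  intro k
  have hab : γ k.castSucc < γ k.succ := hmonoγ (Fin.castSucc_lt_succ (i := k))
  have hbtw : ∀ z ∈ F, ¬ (γ k.castSucc < z ∧ z < γ k.succ) := by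
    rintro z hz ⟨h1, h2⟩
    obtain ⟨m, rfl⟩ := hsurj z hz
    have hm1 : k.castSucc < m := hmonoγ.lt_iff_lt.mp h1
    have hm2 : m < k.succ := hmonoγ.lt_iff_lt.mp h2
    rw [Fin.lt_def] at hm1 hm2
    simp only [Fin.coe_castSucc, Fin.val_succ] at hm1 hm2
    omega
  -- find the original segment containing the pair
  obtain ⟨i, hia, hib⟩ : ∃ i : Fin M, γ' i.castSucc ≤ γ k.castSucc ∧ γ k.succ ≤ γ' i.succ := by
    have hx0 : 0 ≤ γ k.castSucc := (hbound _ (hγF k.castSucc)).1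
    have hyT : γ k.succ ≤ T := (hbound _ (hγF k.succ)).2
    set S : Finset (Fin (M + 1)) := Finset.univ.filter (fun j => γ' j ≤ γ k.castSucc) with hS
    have hSne : S.Nonempty := ⟨0, Finset.mem_filter.mpr ⟨Finset.mem_univ _, by
      rw [h0]; exact hx0⟩⟩
    set j := S.max' hSne with hj
    have hjle : γ' j ≤ γ k.castSucc := (Finset.mem_filter.mp (S.max'_mem hSne)).2
    have hjlt : (j : ℕ) < M := by
      by_contra hc
      have hje : j = Fin.last M := Fin.ext (le_antisymm (Nat.lt_succ_iff.mp j.isLt) (not_lt.mp hc))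
      rw [hje, hlast] at hjle
      linarith
    refine ⟨⟨(j : ℕ), hjlt⟩, hjle, ?_⟩
    have hsucc : γ k.castSucc < γ' (Fin.succ ⟨(j : ℕ), hjlt⟩) := by
      by_contra hc
      push_neg at hc
      have hmem : Fin.succ ⟨(j : ℕ), hjlt⟩ ∈ S := Finset.mem_filter.mpr ⟨Finset.mem_univ _, hc⟩
      have := S.le_max' _ hmem
      rw [← hj, Fin.le_def] at this
      simp only [Fin.val_succ] at this
      omega
    by_contra hc
    push_neg at hc
    exact hbtw (γ' (Fin.succ ⟨(j : ℕ), hjlt⟩)) (hγ'F _) ⟨hsucc, hc⟩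
  obtain ⟨u, w, huw⟩ := haff i
  have hsub : Set.Icc (γ k.castSucc) (γ k.succ) ⊆ Set.Icc (γ' i.castSucc) (γ' i.succ) :=
    Set.Icc_subset_Icc hia hib
  refine ⟨⟨u, w, fun t ht => huw t (hsub ht)⟩, ?_⟩
  set A := (∑ j, c j * u j) + b with hA
  set B := ∑ j, c j * w j with hB
  have hg : ∀ t ∈ Set.Icc (γ' i.castSucc) (γ' i.succ), ∑ j, c j * σ t j + b = A + t * B := by
    intro t ht
    rw [huw t ht]
    simp only [Pi.add_apply, Pi.smul_apply, smul_eq_mul]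
    have h1 : ∀ j : V, c j * (u j + t * w j) = c j * u j + t * (c j * w j) := fun j => by ring
    simp_rw [h1]
    rw [Finset.sum_add_distrib, ← Finset.mul_sum, hA, hB]
    ring
  have hmema : γ k.castSucc ∈ Set.Icc (γ k.castSucc) (γ k.succ) := ⟨le_refl _, hab.le⟩
  have hmemb : γ k.succ ∈ Set.Icc (γ k.castSucc) (γ k.succ) := ⟨hab.le, le_refl _⟩
  have hva : ∑ j, c j * σ (γ k.castSucc) j + b = A + γ k.castSucc * B := hg _ (hsub hmema)
  have hvb : ∑ j, c j * σ (γ k.succ) j + b = A + γ k.succ * B := hg _ (hsub hmemb)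
  rw [hva, hvb]
  intro hcross
  have hgc : Continuous fun t : ℝ => A + t * B := continuous_const.add (continuous_id.mul continuous_const)
  have key : ((δ ≤ A + γ k.castSucc * B ∧ A + γ k.succ * B < 0) ∨
      (δ ≤ A + γ k.succ * B ∧ A + γ k.castSucc * B < 0)) → False := by
    intro hcase
    obtain ⟨t0, ht0, hgt0⟩ : ∃ t0 ∈ Set.Ioo (γ k.castSucc) (γ k.succ), A + t0 * B = 0 := by
      rcases hcase with ⟨h1, h2⟩ | ⟨h1, h2⟩
      · have h0m : (0 : ℝ) ∈ Set.Ioo (A + γ k.succ * B) (A + γ k.castSucc * B) :=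
          ⟨h2, lt_of_lt_of_le hδ h1⟩
        have := intermediate_value_Ioo' hab.le hgc.continuousOn h0m
        obtain ⟨t0, ht0, hg0⟩ := this
        exact ⟨t0, ht0, hg0⟩
      · have h0m : (0 : ℝ) ∈ Set.Ioo (A + γ k.castSucc * B) (A + γ k.succ * B) :=
          ⟨h2, lt_of_lt_of_le hδ h1⟩
        have := intermediate_value_Ioo hab.le hgc.continuousOn h0m
        obtain ⟨t0, ht0, hg0⟩ := this
        exact ⟨t0, ht0, hg0⟩
    have hB0 : B ≠ 0 := by
      intro hB0
      rcases hcase with ⟨h1, h2⟩ | ⟨h1, h2⟩ <;>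
        rw [hB0, mul_zero, add_zero] at h1 h2 <;> linarith
    have ht0seg : t0 ∈ Set.Ioo (γ' i.castSucc) (γ' i.succ) :=
      ⟨lt_of_le_of_lt hia ht0.1, lt_of_lt_of_le ht0.2 hib⟩
    have hzero : ∑ j, c j * σ t0 j + b = 0 := by
      rw [hg t0 (Set.Ioo_subset_Icc_self ht0seg)]
      exact hgt0
    obtain ⟨htpmem, htpzero⟩ := (htp i).2 ⟨t0, ht0seg, hzero⟩
    have hgtp : A + tp i * B = 0 := by
      rw [← hg (tp i) (Set.Ioo_subset_Icc_self htpmem)]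
      exact htpzero
    have heq : tp i = t0 := by
      have h1 : tp i * B = t0 * B := by linarith
      exact mul_right_cancel₀ hB0 h1
    exact hbtw (tp i) (htpF i) ⟨heq ▸ ht0.1, heq ▸ ht0.2⟩
  by_cases hda : δ ≤ A + γ k.castSucc * B
  · refine ⟨le_trans hδ.le hda, ?_⟩
    have hdb : ¬ δ ≤ A + γ k.succ * B := fun h => hcross ⟨fun _ => h, fun _ => hda⟩
    by_contra hb
    push_neg at hb
    exact key (Or.inl ⟨hda, hb⟩)
  · have hdb : δ ≤ A + γ k.succ * B := by
      by_contra h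
      exact hcross (iff_of_false hda h)
    refine ⟨?_, le_trans hδ.le hdb⟩
    by_contra ha'
    push_neg at ha'
    exact key (Or.inr ⟨hdb, ha'⟩)
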